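/- arXiv:2601.00667 — 2 statements merged into one kernel-verified Lean document; each statement's English description precedes it below -/
import Mathlib

section
/- Let h be a multisegment, Δ a segment admissible to h, and Δ' a segment linked to Δ with Δ < Δ'. Then the following are equivalent: (1) the triple (Δ, Δ', h) satisfies the non-overlapping property; (2) η_{Δ'}(h) = η_{Δ'}(r(Δ,h)); (3) the triple (Δ, Δ', h) satisfies the intermediate segment property. -/
noncomputable section
open Classical

/-- A segment `[a,b]`: a pair of integers with `a ≤ b`, identified with the
integer interval `{a, a+1, …, b}`. -/
def Seg : Type := {p : ℤ × ℤ // p.1 ≤ p.2}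

/-- Constructor for segments. -/
def Seg.mk (a b : ℤ) (hab : a ≤ b) : Seg := Subtype.mk (a, b) hab

instance : DecidableEq Seg := inferInstanceAs (DecidableEq {p : ℤ × ℤ // p.1 ≤ p.2})

instance : Inhabited Seg := ⟨Seg.mk 0 0 le_rfl⟩

/-- The lexicographic ordering `≼ᴸ` on segments: `[a,b] ≤ [a',b']` iff `a < a'`,
or `a = a'` and `b ≤ b'`. -/
instance : LinearOrder Seg :=
  LinearOrder.lift' (fun Δ => toLex (Subtype.val Δ))
    (fun _ _ hh => Subtype.ext (toLex.injective hh))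

/-- `a(Δ)`, the left endpoint. -/
def segA (Δ : Seg) : ℤ := (Subtype.val Δ).1

/-- `b(Δ)`, the right endpoint. -/
def segB (Δ : Seg) : ℤ := (Subtype.val Δ).2

/-- `[a,b]` as a multiset of segments: a singleton if `a ≤ b`, empty otherwise
("empty segments are discarded"). -/
def mkSeg? (a b : ℤ) : Multiset Seg := if h : a ≤ b then {Seg.mk a b h} else 0

/-- `⁻Δ = [a+1,b]`, as a multiset (the empty segment being discarded). -/
def negSeg (Δ : Seg) : Multiset Seg := mkSeg? (segA Δ + 1) (segB Δ)

/-- `⁻m` for a multisegment `m`. -/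
def negM (m : Multiset Seg) : Multiset Seg := m.bind negSeg

/-- `m[c]`: the submultiset of segments of `m` starting at `c`. -/
def atc (m : Multiset Seg) (c : ℤ) : Multiset Seg := m.filter (fun Δ => segA Δ = c)

/-- `Δ ⊆ Δ'` as intervals. -/
def Subseg (Δ Δ' : Seg) : Prop := segA Δ' ≤ segA Δ ∧ segB Δ ≤ segB Δ'

/-- Two segments are linked: their union is an interval and neither contains
the other. -/
def Linked (Δ Δ' : Seg) : Prop :=
  segA Δ ≤ segB Δ' + 1 ∧ segA Δ' ≤ segB Δ + 1 ∧ ¬ Subseg Δ Δ' ∧ ¬ Subseg Δ' Δ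

/-- `Δ = [a,b]` is admissible to `h`: `h` contains a segment `[a,c]` with `c ≥ b`. -/
def SegAdmissible (Δ : Seg) (h : Multiset Seg) : Prop :=
  ∃ D ∈ h, segA D = segA Δ ∧ segB Δ ≤ segB D

/-- The tail of the removal sequence: recursively pick the `≺ᴸ`-minimal segment
`[aᵢ,bᵢ]` of `h` with `a_{i-1} < aᵢ` and `b ≤ bᵢ < b_{i-1}`. -/
def removalTail (h : Multiset Seg) (b : ℤ) : ℕ → ℤ → ℤ → List Seg
  | 0, _, _ => []
  | fuel + 1, aprev, bprev =>
    if hx : ∃ D, (D ∈ h ∧ aprev < segA D ∧ b ≤ segB D ∧ segB D < bprev) ∧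
        ∀ D', (D' ∈ h ∧ aprev < segA D' ∧ b ≤ segB D' ∧ segB D' < bprev) → D ≤ D' then
      Classical.choose hx ::
        removalTail h b fuel (segA (Classical.choose hx)) (segB (Classical.choose hx))
    else []

/-- The removal sequence for `(Δ, h)`: `Δ₁` is a shortest segment `[a,c]` of `h`
with `c ≥ b`, followed by the recursively chosen segments. (Empty if `Δ` is not
admissible to `h`.) -/
def removalSeq (Δ : Seg) (h : Multiset Seg) : List Seg :=
  if hx : ∃ D, (D ∈ h ∧ segA D = segA Δ ∧ segB Δ ≤ segB D) ∧
      ∀ D', (D' ∈ h ∧ segA D' = segA Δ ∧ segB Δ ≤ segB D') → segB D ≤ segB D' then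
    Classical.choose hx ::
      removalTail h (segB Δ) (segB (Classical.choose hx) - segB Δ).toNat
        (segA (Classical.choose hx)) (segB (Classical.choose hx))
  else []

/-- `Υ(Δ,h)`: the first segment of the removal sequence for `(Δ,h)`. -/
def Upsilon (Δ : Seg) (h : Multiset Seg) : Seg := (removalSeq Δ h).headD default

/-- The truncations `Δ₁ᵗʳ, …, Δᵣᵗʳ` of a removal sequence:
`Δᵢᵗʳ = [a_{i+1}, bᵢ]` for `i < r` and `Δᵣᵗʳ = [b+1, bᵣ]` (possibly empty). -/
def truncList (b : ℤ) : List Seg → Multiset Seg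
  | [] => 0
  | [D] => mkSeg? (b + 1) (segB D)
  | D :: D' :: rest => mkSeg? (segA D') (segB D) + truncList b (D' :: rest)

/-- `r(Δ,h) = h − Δ₁ − … − Δᵣ + Δ₁ᵗʳ + … + Δᵣᵗʳ`, with `none` playing the role
of the infinity multisegment `∞`. -/
def segRemove (Δ : Seg) (h : Multiset Seg) : Option (Multiset Seg) :=
  if SegAdmissible Δ h then
    some (h - (removalSeq Δ h : Multiset Seg) + truncList (segB Δ) (removalSeq Δ h))
  else none

/-- Iterated removal along a list of segments (also `r(Δ,∞) = ∞`). -/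
def rList : List Seg → Option (Multiset Seg) → Option (Multiset Seg)
  | [], o => o
  | Δ :: rest, o => rList rest (o.bind (fun x => segRemove Δ x))

/-- `r(m,h)` for a multisegment `m`: apply the removals along the segments of
`m` listed in an ascending (here: `≺ᴸ`-sorted) order. -/
def rM (m h : Multiset Seg) : Option (Multiset Seg) :=
  rList (m.sort (· ≤ ·)) (some h)

/-- The smallest integer `a` with `n[a] ≠ ∅` (junk value `0` for `n = ∅`). -/
def minStart (n : Multiset Seg) : ℤ := ((n.map segA).sort (· ≤ ·)).headD 0

/-- `Υ(Δ₁,r₀), Υ(Δ₂,r₁), …` computed sequentially along a list of segments. -/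
def fsList : List Seg → Multiset Seg → Multiset Seg
  | [], _ => 0
  | Δ :: rest, h =>
    Upsilon Δ h ::ₘ
      (match segRemove Δ h with
        | some h' => fsList rest h'
        | none => 0)

/-- `fs(n,h)`: with `a` the smallest integer such that `n[a] ≠ ∅` and
`n[a] = {Δ₁, …, Δₖ}`, this is `{Υ(Δ₁,r₀), …, Υ(Δₖ,r_{k-1})}` if `n[a]` is
admissible to `h`, and `∅` otherwise (also `fs(∅,h) = ∅`). -/
def fs (n h : Multiset Seg) : Multiset Seg :=
  if n = 0 then 0
  else if rM (atc n (minStart n)) h ≠ none then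
    fsList ((atc n (minStart n)).sort (· ≤ ·)) h
  else 0

/-- `trr(n,h) = h − fs(n,h) + ⁻(fs(n,h))`. -/
def trr (n h : Multiset Seg) : Multiset Seg := h - fs n h + negM (fs n h)

/-- `trd(n,h) = n − n[a] + ⁻(n[a])` where `a` is the smallest integer with
`n[a] ≠ ∅` (and `trd(∅,h) = ∅`). -/
def trd (n h : Multiset Seg) : Multiset Seg :=
  if n = 0 then 0 else n - atc n (minStart n) + negM (atc n (minStart n))

/-- The pairs `(nᵢ, hᵢ)` of the fine chain: `n₀ = n`, `h₀ = h`,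
`nᵢ = trd(n_{i-1}, h_{i-1})`, `hᵢ = trr(n_{i-1}, h_{i-1})`. -/
def fcPair (n h : Multiset Seg) : ℕ → Multiset Seg × Multiset Seg
  | 0 => (n, h)
  | i + 1 => (trd (fcPair n h i).1 (fcPair n h i).2, trr (fcPair n h i).1 (fcPair n h i).2)

/-- The fine chain `fc_h(n)`: the sequence `fs(n₀,h₀), fs(n₁,h₁), …`. -/
def fc (h n : Multiset Seg) (i : ℕ) : Multiset Seg := fs (fcPair n h i).1 (fcPair n h i).2

/-- `n` is obtained from `m` by an elementary intersection-union operation: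
`n = m − Δ − Δ' + (Δ ∪ Δ') + (Δ ∩ Δ')` for a pair of linked segments `Δ, Δ'`
of `m` (intersection omitted if empty). -/
def elemIU (m n : Multiset Seg) : Prop :=
  ∃ Δ Δ', Δ ∈ m ∧ Δ' ∈ m.erase Δ ∧ Linked Δ Δ' ∧
    n = (m.erase Δ).erase Δ'
        + mkSeg? (min (segA Δ) (segA Δ')) (max (segB Δ) (segB Δ'))
        + mkSeg? (max (segA Δ) (segA Δ')) (min (segB Δ) (segB Δ'))

/-- The Zelevinsky ordering: `n ≤_Z m` iff `n = m` or `n` is obtained from `m`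
by a finite sequence of elementary intersection-union operations. -/
def leZ (n m : Multiset Seg) : Prop := Relation.ReflTransGen elemIU m n

/-- The cuspidal support of a multisegment: the multiset union of its segments,
as a multiset of integers. -/
def csupp (m : Multiset Seg) : Multiset ℤ :=
  m.bind (fun Δ => (Finset.Icc (segA Δ) (segB Δ)).val)

/-- The `b`-values of a multisegment, sorted in descending order. -/
def bDesc (m : Multiset Seg) : List ℤ := ((m.map segB).sort (· ≤ ·)).reverse

/-- `m₁ ≤ᵃ_c m₂` for multisegments at a point `c`: with segments labelled
`Δ_{1,k} ≤ᵃ_c … ≤ᵃ_c Δ_{1,1}` and `Δ_{2,r} ≤ᵃ_c … ≤ᵃ_c Δ_{2,1}`, require `k ≤ r`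
and `Δ_{1,i} ≤ᵃ_c Δ_{2,i}` for all `i ≤ k`. -/
def leA (m₁ m₂ : Multiset Seg) : Prop :=
  (bDesc m₁).length ≤ (bDesc m₂).length ∧
    ∀ i < (bDesc m₁).length, (bDesc m₁).getD i 0 ≤ (bDesc m₂).getD i 0

/-- `m₁ <ᵃ_c m₂`. -/
def ltA (m₁ m₂ : Multiset Seg) : Prop := leA m₁ m₂ ∧ m₁ ≠ m₂

/-- The fine chain ordering `n <^{fc} n'` (with respect to `h`). -/
def ltFC (h n n' : Multiset Seg) : Prop :=
  ∃ i, (∀ j < i, fc h n j = fc h n' j) ∧ ltA (fc h n i) (fc h n' i)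

/-- `n ≤^{fc} n'`: either `n <^{fc} n'` or the two fine chains are equal. -/
def leFC (h n n' : Multiset Seg) : Prop := ltFC h n n' ∨ ∀ i, fc h n i = fc h n' i

/-- Local minimizability of `(n,h)`: with `a` the smallest integer such that
`n[a] ≠ ∅`, there is a segment `Δ̄` in `n[a+1]` with
`|{Δ ∈ n[a] : Δ̄ ⊆ Δ}| < |{Δ ∈ fs(n,h) : Δ̄ ⊆ Δ}|`. -/
def locallyMin (n h : Multiset Seg) : Prop :=
  ∃ Δb ∈ atc n (minStart n + 1),
    ((atc n (minStart n)).filter (fun Δ => Subseg Δb Δ)).card <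
      ((fs n h).filter (fun Δ => Subseg Δb Δ)).card

/-- The shortest segment of the removal sequence for `(Δ,h)` whose interval
contains `x` (by the nesting property, the last such one in the sequence). -/
def shortestCont (Δ : Seg) (h : Multiset Seg) (x : ℤ) : Seg :=
  (((removalSeq Δ h).filter (fun D => decide (segA D ≤ x ∧ x ≤ segB D))).getLast?).getD default

/-- The non-overlapping property for `(Δ, Δ', h)`: for the shortest segment `Δ̄`
in the removal sequence for `(Δ,h)` containing `a(Δ') − 1`, one has `Δ' ⊄ Δ̄`. -/
def NonOverlap (Δ Δ' : Seg) (h : Multiset Seg) : Prop :=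
  ¬ Subseg Δ' (shortestCont Δ h (segA Δ' - 1))

/-- `ε_Δ(h) = |{Δ̃ ∈ h[a(Δ)] : Δ ⊆ Δ̃}|`, counted with multiplicity. -/
def epsilonSeg (Δ : Seg) (h : Multiset Seg) : ℕ :=
  ((atc h (segA Δ)).filter (fun D => Subseg Δ D)).card

/-- `η_{Δ'}(h) = η_{Δ'}(h')`: componentwise equality of
`(ε_{[a',b']}, ε_{[a'+1,b']}, …, ε_{[b',b']})`. -/
def etaEq (Δ' : Seg) (h h' : Multiset Seg) : Prop :=
  ∀ c, segA Δ' ≤ c → ∀ hc : c ≤ segB Δ',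
    epsilonSeg (Seg.mk c (segB Δ') hc) h = epsilonSeg (Seg.mk c (segB Δ') hc) h'

/-- The intermediate segment property for `(Δ, Δ', h)`. -/
def IntermediateSeg (Δ Δ' : Seg) (h : Multiset Seg) : Prop :=
  ∃ D ∈ h, segA Δ ≤ segA D ∧ segA D < segA Δ' ∧ segB Δ ≤ segB D ∧ segB D < segB Δ'

/-- Helper to build segments from literals. -/
def sg (a b : ℤ) (hab : a ≤ b := by decide) : Seg := Seg.mk a b hab

section Aux16

private lemma segA_le_segB (D : Seg) : segA D ≤ segB D := D.2

@[simp] private lemma segA_mk (u v : ℤ) (huv : u ≤ v) : segA (Seg.mk u v huv) = u := rfl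
@[simp] private lemma segB_mk (u v : ℤ) (huv : u ≤ v) : segB (Seg.mk u v huv) = v := rfl

private lemma seg_le_iff {E D : Seg} :
    E ≤ D ↔ segA E < segA D ∨ (segA E = segA D ∧ segB E ≤ segB D) := by
  show toLex E.val ≤ toLex D.val ↔ _
  rw [Prod.Lex.le_iff]
  exact Iff.rfl

/-- The basic relation along a removal sequence. -/
private def segR (D E : Seg) : Prop := segA D < segA E ∧ segB E < segB D

private lemma removalTail_mem (h : Multiset Seg) (b : ℤ) :
    ∀ (f : ℕ) (ap bp : ℤ) (D : Seg), D ∈ removalTail h b f ap bp →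
      D ∈ h ∧ ap < segA D ∧ b ≤ segB D ∧ segB D < bp := by
  intro f
  induction f with
  | zero => intro ap bp D hD; simp [removalTail] at hD
  | succ n ih =>
    intro ap bp D hD
    rw [removalTail] at hD
    split at hD
    case isTrue hx =>
      have hspec := Classical.choose_spec hx
      rcases List.mem_cons.mp hD with rfl | hD'
      · exact hspec.1
      · obtain ⟨h1, h2, h3, h4⟩ := ih _ _ _ hD'
        exact ⟨h1, lt_trans hspec.1.2.1 h2, h3, lt_trans h4 hspec.1.2.2.2⟩
    case isFalse hx => simp at hD

private lemma removalTail_pairwise (h : Multiset Seg) (b : ℤ) :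
    ∀ (f : ℕ) (ap bp : ℤ), (removalTail h b f ap bp).Pairwise segR := by
  intro f
  induction f with
  | zero => intro ap bp; simp [removalTail]
  | succ n ih =>
    intro ap bp
    rw [removalTail]
    split
    case isTrue hx =>
      refine List.Pairwise.cons ?_ (ih _ _)
      intro E hE
      obtain ⟨_, h2, _, h4⟩ := removalTail_mem h b _ _ _ _ hE
      exact ⟨h2, h4⟩
    case isFalse hx => simp

private lemma removalTail_min (h : Multiset Seg) (b : ℤ) :
    ∀ (f : ℕ) (ap bp : ℤ), (bp - b).toNat ≤ f →
      ∀ D ∈ h, ap < segA D → b ≤ segB D → segB D < bp →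
        ∃ E ∈ removalTail h b f ap bp, segA E ≤ segA D ∧ segB E ≤ segB D := by
  intro f
  induction f with
  | zero => intro ap bp hf D _ _ h2 h3; omega
  | succ n ih =>
    intro ap bp hf D hD h1 h2 h3
    have hx : ∃ E, (E ∈ h ∧ ap < segA E ∧ b ≤ segB E ∧ segB E < bp) ∧
        ∀ D', (D' ∈ h ∧ ap < segA D' ∧ b ≤ segB D' ∧ segB D' < bp) → E ≤ D' := by
      obtain ⟨E, hEmem, hEmin⟩ := Finset.exists_min_image
        (h.toFinset.filter (fun E => ap < segA E ∧ b ≤ segB E ∧ segB E < bp)) id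
        ⟨D, by simp only [Finset.mem_filter, Multiset.mem_toFinset]; exact ⟨hD, h1, h2, h3⟩⟩
      simp only [Finset.mem_filter, Multiset.mem_toFinset] at hEmem
      refine ⟨E, ⟨hEmem.1, hEmem.2⟩, ?_⟩
      intro D' hD'
      exact hEmin D' (by simp only [Finset.mem_filter, Multiset.mem_toFinset]; exact ⟨hD'.1, hD'.2⟩)
    rw [removalTail, dif_pos hx]
    have hspec := Classical.choose_spec hx
    set E₀ := Classical.choose hx with hE₀
    have hle : E₀ ≤ D := hspec.2 D ⟨hD, h1, h2, h3⟩
    rw [seg_le_iff] at hle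
    by_cases hb : segB E₀ ≤ segB D
    · refine ⟨E₀, List.mem_cons_self, ?_, hb⟩
      rcases hle with h' | h'
      · exact le_of_lt h'
      · exact le_of_eq h'.1
    · push_neg at hb
      have haa : segA E₀ < segA D := by
        rcases hle with h' | h'
        · exact h'
        · exact absurd h'.2 (not_le.mpr hb)
      have hc1 : b ≤ segB E₀ := hspec.1.2.2.1
      have hc2 : segB E₀ < bp := hspec.1.2.2.2
      obtain ⟨E, hE1, hE2⟩ := ih (segA E₀) (segB E₀) (by omega) D hD haa h2 hb
      exact ⟨E, List.mem_cons_of_mem _ hE1, hE2⟩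

private lemma removalSeq_spec (h : Multiset Seg) (Δ : Seg) (hadm : SegAdmissible Δ h) :
    ∃ D₁, removalSeq Δ h
        = D₁ :: removalTail h (segB Δ) (segB D₁ - segB Δ).toNat (segA D₁) (segB D₁) ∧
      D₁ ∈ h ∧ segA D₁ = segA Δ ∧ segB Δ ≤ segB D₁ ∧
      ∀ D' ∈ h, segA D' = segA Δ → segB Δ ≤ segB D' → segB D₁ ≤ segB D' := by
  have hx : ∃ D, (D ∈ h ∧ segA D = segA Δ ∧ segB Δ ≤ segB D) ∧
      ∀ D', (D' ∈ h ∧ segA D' = segA Δ ∧ segB Δ ≤ segB D') → segB D ≤ segB D' := by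
    obtain ⟨D0, hD0, h1, h2⟩ := hadm
    obtain ⟨E, hEmem, hEmin⟩ := Finset.exists_min_image
      (h.toFinset.filter (fun E => segA E = segA Δ ∧ segB Δ ≤ segB E)) segB
      ⟨D0, by simp only [Finset.mem_filter, Multiset.mem_toFinset]; exact ⟨hD0, h1, h2⟩⟩
    simp only [Finset.mem_filter, Multiset.mem_toFinset] at hEmem
    refine ⟨E, ⟨hEmem.1, hEmem.2⟩, ?_⟩
    intro D' hD'
    exact hEmin D' (by simp only [Finset.mem_filter, Multiset.mem_toFinset]; exact ⟨hD'.1, hD'.2⟩)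
  have hspec := Classical.choose_spec hx
  refine ⟨Classical.choose hx, ?_, hspec.1.1, hspec.1.2.1, hspec.1.2.2, ?_⟩
  · rw [removalSeq, dif_pos hx]
  · intro D' m e l
    exact hspec.2 D' ⟨m, e, l⟩

private lemma pair_getLast :
    ∀ (l : List Seg), l.Pairwise segR → ∀ E ∈ l,
      segB (l.getLast?.getD default) ≤ segB E ∧ segA E ≤ segA (l.getLast?.getD default) := by
  intro l
  induction l with
  | nil => intro _ E hE; simp at hE
  | cons D rest ih =>
    intro hp E hE
    cases rest with
    | nil =>
      simp only [List.mem_singleton] at hE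
      subst hE
      simp
    | cons D' rest' =>
      rw [List.getLast?_cons_cons]
      have hpr := List.pairwise_cons.mp hp
      rcases List.mem_cons.mp hE with rfl | hE'
      · have hsome : (D'::rest').getLast? = some ((D'::rest').getLast (by simp)) :=
          List.getLast?_eq_getLast (by simp)
        have hmem : (D'::rest').getLast (by simp) ∈ D'::rest' := List.getLast_mem _
        have hrel := hpr.1 _ hmem
        rw [hsome]
        exact ⟨le_of_lt hrel.2, le_of_lt hrel.1⟩
      · exact ih hpr.2 E hE'

private lemma chain'_of_adj {S : Seg → Seg → Prop} :
    ∀ (l : List Seg), (∀ E F (l1 l2 : List Seg), l = l1 ++ E :: F :: l2 → S E F) →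
      l.Chain' S := by
  intro l
  induction l with
  | nil => intro _; exact List.isChain_nil
  | cons D rest ih =>
    intro hadj
    cases rest with
    | nil => exact List.isChain_singleton _
    | cons D' rest' =>
      rw [show @List.Chain' Seg = @List.IsChain Seg from rfl, List.isChain_cons_cons]
      refine ⟨hadj D D' [] rest' rfl, ih ?_⟩
      intro E F l1 l2 hdec
      exact hadj E F (D::l1) l2 (by rw [hdec]; rfl)

private lemma chain'_rel {S : Seg → Seg → Prop} {l l1 l2 : List Seg} {E F : Seg}
    (hc : l.Chain' S) (hd : l = l1 ++ E :: F :: l2) : S E F := by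
  subst hd
  have h2 := (List.isChain_append.mp hc).2.1
  exact (List.isChain_cons_cons.mp h2).1

private lemma exists_cross (P : Seg → Prop) :
    ∀ (l : List Seg), (∃ E ∈ l, P E) → ¬ P (l.getLast?.getD default) →
      ∃ (E F : Seg) (l1 l2 : List Seg), l = l1 ++ E :: F :: l2 ∧ P E ∧ ¬ P F := by
  intro l
  induction l with
  | nil => intro hex _; simp at hex
  | cons D rest ih =>
    intro hex hlast
    cases rest with
    | nil =>
      obtain ⟨E, hE, hPE⟩ := hex
      simp only [List.mem_singleton] at hE
      subst hE
      simp at hlast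
      exact absurd hPE hlast
    | cons D' rest' =>
      rw [List.getLast?_cons_cons] at hlast
      by_cases hPD' : P D'
      · obtain ⟨E, F, l1, l2, hdec, hh1, hh2⟩ := ih ⟨D', by simp, hPD'⟩ hlast
        exact ⟨E, F, D::l1, l2, by rw [hdec]; rfl, hh1, hh2⟩
      · by_cases hPD : P D
        · exact ⟨D, D', [], rest', rfl, hPD, hPD'⟩
        · obtain ⟨E, hE, hPE⟩ := hex
          have hE' : E ∈ D'::rest' := by
            rcases List.mem_cons.mp hE with rfl | hh
            · exact absurd hPE hPD
            · exact hh
          obtain ⟨E, F, l1, l2, hdec, hh1, hh2⟩ := ih ⟨E, hE', hPE⟩ hlast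
          exact ⟨E, F, D::l1, l2, by rw [hdec]; rfl, hh1, hh2⟩

/-- Counting of segments starting at `c` with right end at least `b'`. -/
private def cntP (b' c : ℤ) (m : Multiset Seg) : ℕ :=
  (m.filter (fun D => segA D = c ∧ b' ≤ segB D)).card

private lemma cntP_add (b' c : ℤ) (s t : Multiset Seg) :
    cntP b' c (s + t) = cntP b' c s + cntP b' c t := by
  simp [cntP, Multiset.filter_add]

private lemma cntP_cons (b' c : ℤ) (D : Seg) (s : Multiset Seg) :
    cntP b' c (D ::ₘ s) = (if segA D = c ∧ b' ≤ segB D then 1 else 0) + cntP b' c s := by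
  rw [cntP, Multiset.filter_cons, Multiset.card_add, cntP]
  congr 1
  split <;> simp

private lemma cntP_mkSeg (b' c u v : ℤ) :
    cntP b' c (mkSeg? u v) = if u ≤ v ∧ u = c ∧ b' ≤ v then 1 else 0 := by
  rw [cntP, mkSeg?]
  split
  case isTrue huv =>
    rw [Multiset.filter_singleton]
    by_cases hc : u = c ∧ b' ≤ v
    · rw [if_pos (by simpa using hc), if_pos ⟨huv, hc⟩]
      simp
    · rw [if_neg (by simpa using hc), if_neg (by tauto)]
      simp
  case isFalse huv =>
    rw [if_neg (by tauto)]
    simp [cntP]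

private lemma eps_cnt (c b' : ℤ) (hcb : c ≤ b') (m : Multiset Seg) :
    epsilonSeg (Seg.mk c b' hcb) m = cntP b' c m := by
  rw [epsilonSeg, atc, cntP, Multiset.filter_filter]
  congr 1
  apply Multiset.filter_congr
  intro D _
  simp only [Subseg, segA_mk, segB_mk]
  constructor
  · rintro ⟨⟨_, hh2⟩, hh3⟩; exact ⟨hh3, hh2⟩
  · rintro ⟨hh1, hh2⟩; exact ⟨⟨le_of_eq hh1, hh2⟩, hh1⟩

private lemma cntP_nil (b' c : ℤ) : cntP b' c (([] : List Seg) : Multiset Seg) = 0 := rfl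

private lemma cnt_trunc (b b' : ℤ) (hbb : b < b') :
    ∀ (l : List Seg), l.Pairwise segR → l ≠ [] → ∀ c,
      cntP b' c ((l.tail : List Seg) : Multiset Seg) ≤ cntP b' c (truncList b l) ∧
      (cntP b' c (truncList b l) = cntP b' c ((l.tail : List Seg) : Multiset Seg) ↔
        (l.Chain' (fun E F => ¬(segA F = c ∧ b' ≤ segB E ∧ segB F < b')) ∧
          ¬(c = b + 1 ∧ b' ≤ segB (l.getLast?.getD default)))) := by
  intro l
  induction l with
  | nil => intro _ hne; exact absurd rfl hne
  | cons D rest ih =>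
    intro hpw _ c
    cases rest with
    | nil =>
      have ht : truncList b [D] = mkSeg? (b + 1) (segB D) := rfl
      have h0 : cntP b' c ((([D] : List Seg).tail : List Seg) : Multiset Seg) = 0 := rfl
      rw [ht, cntP_mkSeg, h0]
      refine ⟨Nat.zero_le _, ?_⟩
      simp only [List.getLast?_singleton, Option.getD_some]
      split
      case isTrue hcond =>
        refine iff_of_false (by omega) ?_
        rintro ⟨_, hno⟩
        exact hno ⟨hcond.2.1.symm, hcond.2.2⟩
      case isFalse hcond =>
        refine iff_of_true rfl ⟨List.isChain_singleton _, ?_⟩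
        rintro ⟨hh1, hh2⟩
        exact hcond ⟨by omega, hh1.symm, hh2⟩
    | cons D' rest' =>
      have hpr := List.pairwise_cons.mp hpw
      have hDD' : segR D D' := hpr.1 D' (by simp)
      have hAB : segA D' ≤ segB D := le_trans (segA_le_segB D') (le_of_lt hDD'.2)
      have ihs := ih hpr.2 (by simp) c
      simp only [List.tail_cons] at ihs
      have htr : truncList b (D :: D' :: rest') =
          mkSeg? (segA D') (segB D) + truncList b (D' :: rest') := rfl
      have htl : (((D :: D' :: rest').tail : List Seg) : Multiset Seg)
          = D' ::ₘ ((rest' : List Seg) : Multiset Seg) := by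
        simp only [List.tail_cons, Multiset.cons_coe]
      rw [htr, cntP_add, cntP_mkSeg, htl, cntP_cons]
      have hm : (if segA D' ≤ segB D ∧ segA D' = c ∧ b' ≤ segB D then 1 else 0 : ℕ)
          = if segA D' = c ∧ b' ≤ segB D then 1 else 0 := by
        by_cases hcond : segA D' = c ∧ b' ≤ segB D
        · rw [if_pos ⟨hAB, hcond⟩, if_pos hcond]
        · rw [if_neg (by tauto), if_neg hcond]
      rw [hm]
      have hBB : segB D' < segB D := hDD'.2
      have hmt : ((if segA D' = c ∧ b' ≤ segB D then 1 else 0 : ℕ)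
            = (if segA D' = c ∧ b' ≤ segB D' then 1 else 0))
          ↔ ¬(segA D' = c ∧ b' ≤ segB D ∧ segB D' < b') := by
        by_cases hc1 : segA D' = c
        · by_cases hq2 : b' ≤ segB D'
          · have hq1 : b' ≤ segB D := by omega
            rw [if_pos ⟨hc1, hq1⟩, if_pos ⟨hc1, hq2⟩]
            refine iff_of_true rfl ?_
            rintro ⟨_, _, hx⟩
            omega
          · push_neg at hq2
            by_cases hq1 : b' ≤ segB D
            · rw [if_pos ⟨hc1, hq1⟩, if_neg (by rintro ⟨_, hx⟩; omega)]
              exact iff_of_false (by omega) (not_not_intro ⟨hc1, hq1, hq2⟩)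
            · rw [if_neg (by tauto), if_neg (by rintro ⟨_, hx⟩; omega)]
              refine iff_of_true rfl ?_
              rintro ⟨_, hq, _⟩
              exact hq1 hq
        · rw [if_neg (by tauto), if_neg (by tauto)]
          refine iff_of_true rfl ?_
          rintro ⟨hce, _, _⟩
          exact hc1 hce
      have ht_le : (if segA D' = c ∧ b' ≤ segB D' then 1 else 0 : ℕ)
          ≤ if segA D' = c ∧ b' ≤ segB D then 1 else 0 := by
        by_cases h2 : segA D' = c ∧ b' ≤ segB D'
        · rw [if_pos h2, if_pos ⟨h2.1, by omega⟩]
        · rw [if_neg h2]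
          exact Nat.zero_le _
      set m := (if segA D' = c ∧ b' ≤ segB D then 1 else 0 : ℕ) with hmdef
      set t := (if segA D' = c ∧ b' ≤ segB D' then 1 else 0 : ℕ) with htdef
      set X := cntP b' c (truncList b (D' :: rest')) with hXdef
      set Y := cntP b' c ((rest' : List Seg) : Multiset Seg) with hYdef
      have hYX : Y ≤ X := ihs.1
      have hiff := ihs.2
      refine ⟨by omega, ?_⟩
      rw [show @List.Chain' Seg = @List.IsChain Seg from rfl, List.isChain_cons_cons, List.getLast?_cons_cons]
      constructor
      · intro heq
        have h1 : m = t := by omega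
        have h2 : X = Y := by omega
        have h3 := hiff.mp h2
        exact ⟨⟨hmt.mp h1, h3.1⟩, h3.2⟩
      · rintro ⟨⟨hnc, hch⟩, hnl⟩
        have h1 : m = t := hmt.mpr hnc
        have h2 : X = Y := hiff.mpr ⟨hch, hnl⟩
        omega

end Aux16

/-- equivalence of the non-overlapping property, the
`η`-invariant condition, and the intermediate segment property. -/
theorem statement16 (h : Multiset Seg) (Δ Δ' : Seg)
    (hadm : SegAdmissible Δ h) (hlink : Linked Δ Δ') (hlt : segB Δ < segB Δ') :
    (NonOverlap Δ Δ' h ↔ etaEq Δ' h ((segRemove Δ h).getD 0)) ∧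
    (NonOverlap Δ Δ' h ↔ IntermediateSeg Δ Δ' h) := by
  classical
  obtain ⟨D₁, hLdef, hD₁h, hD₁a, hD₁b, hD₁min⟩ := removalSeq_spec h Δ hadm
  set L := removalSeq Δ h with hLL
  have haa' : segA Δ < segA Δ' := by
    by_contra hcon
    push_neg at hcon
    exact hlink.2.2.1 ⟨hcon, le_of_lt hlt⟩
  have ha'b : segA Δ' ≤ segB Δ + 1 := hlink.2.1
  have Lmem : ∀ D ∈ L, D ∈ h ∧ segA Δ ≤ segA D ∧ segB Δ ≤ segB D := by
    intro D hD
    rw [hLdef] at hD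
    rcases List.mem_cons.mp hD with rfl | hD'
    · exact ⟨hD₁h, le_of_eq hD₁a.symm, hD₁b⟩
    · obtain ⟨h1, h2, h3, _⟩ := removalTail_mem h (segB Δ) _ _ _ D hD'
      exact ⟨h1, by omega, h3⟩
  have Lpair : L.Pairwise segR := by
    rw [hLdef]
    refine List.Pairwise.cons ?_ (removalTail_pairwise h (segB Δ) _ _ _)
    intro E hE
    obtain ⟨_, h2, _, h4⟩ := removalTail_mem h (segB Δ) _ _ _ E hE
    exact ⟨h2, h4⟩
  have hLne : L ≠ [] := by rw [hLdef]; simp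
  have LemA : ∀ D ∈ h, segA Δ ≤ segA D → segB Δ ≤ segB D →
      ∃ E ∈ L, segA E ≤ segA D ∧ segB E ≤ segB D := by
    intro D hD h1 h2
    by_cases hc : segA D = segA Δ
    · refine ⟨D₁, ?_, by omega, hD₁min D hD hc h2⟩
      rw [hLdef]; exact List.mem_cons_self
    · have h1' : segA Δ < segA D := lt_of_le_of_ne h1 (Ne.symm hc)
      by_cases hb : segB D₁ ≤ segB D
      · refine ⟨D₁, ?_, by omega, hb⟩
        rw [hLdef]; exact List.mem_cons_self
      · push_neg at hb
        obtain ⟨E, hE1, hE2⟩ := removalTail_min h (segB Δ) _ (segA D₁) (segB D₁)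
          le_rfl D hD (by omega) h2 hb
        refine ⟨E, ?_, hE2⟩
        rw [hLdef]; exact List.mem_cons_of_mem _ hE1
  have hfil : L.filter (fun D => decide (segA D ≤ segA Δ' - 1 ∧ segA Δ' - 1 ≤ segB D))
      = L.filter (fun D => decide (segA D ≤ segA Δ' - 1)) := by
    apply List.filter_congr
    intro D hD
    have hx2 : segA Δ' - 1 ≤ segB D := by
      have := (Lmem D hD).2.2
      omega
    simp [hx2]
  set M := L.filter (fun D => decide (segA D ≤ segA Δ' - 1)) with hMdef
  have hD₁M : D₁ ∈ M := by
    rw [hMdef]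
    refine List.mem_filter.mpr ⟨?_, ?_⟩
    · rw [hLdef]; exact List.mem_cons_self
    · simp only [decide_eq_true_eq]
      omega
  have hMne : M ≠ [] := List.ne_nil_of_mem hD₁M
  set Δb := M.getLast?.getD default with hΔbdef
  have hbar : shortestCont Δ h (segA Δ' - 1) = Δb := by
    rw [shortestCont, ← hLL, hfil, hΔbdef]
  have hΔbM : Δb ∈ M := by
    rw [hΔbdef, List.getLast?_eq_getLast hMne, Option.getD_some]
    exact List.getLast_mem _
  have hΔbL : Δb ∈ L := (List.mem_filter.mp hΔbM).1
  have hΔbx : segA Δb ≤ segA Δ' - 1 := by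
    have := (List.mem_filter.mp hΔbM).2
    simpa using this
  have Mpair : M.Pairwise segR := List.Pairwise.sublist (List.filter_sublist) Lpair
  have D2 : ∀ F ∈ L, segA F ≤ segA Δ' - 1 → segB Δb ≤ segB F := by
    intro F hF hle
    exact (pair_getLast M Mpair F (List.mem_filter.mpr ⟨hF, by simpa using hle⟩)).1
  have hNO : NonOverlap Δ Δ' h ↔ segB Δb < segB Δ' := by
    rw [NonOverlap, hbar, Subseg]
    constructor
    · intro hn
      by_contra hcon
      push_neg at hcon
      exact hn ⟨by omega, hcon⟩
    · intro hb hsub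
      have := hsub.2
      omega
  have h13 : NonOverlap Δ Δ' h ↔ IntermediateSeg Δ Δ' h := by
    rw [hNO]
    constructor
    · intro hb
      obtain ⟨hmem, hh1, hh2⟩ := Lmem Δb hΔbL
      exact ⟨Δb, hmem, hh1, by omega, hh2, hb⟩
    · rintro ⟨D, hD, h1, h2, h3, h4⟩
      obtain ⟨E, hEL, hE1, hE2⟩ := LemA D hD h1 h3
      have := D2 E hEL (by omega)
      omega
  have hgetD : (segRemove Δ h).getD 0
      = h - (L : Multiset Seg) + truncList (segB Δ) L := by
    rw [segRemove, if_pos hadm, ← hLL, Option.getD_some]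
  have hnodup : L.Nodup := by
    refine List.Pairwise.imp ?_ Lpair
    intro E F hR hEF
    rw [hEF] at hR
    exact lt_irrefl _ hR.1
  have hsub : (L : Multiset Seg) ≤ h := by
    rw [Multiset.le_iff_count]
    intro s
    by_cases hs : s ∈ L
    · have h1 : Multiset.count s (L : Multiset Seg) ≤ 1 := by
        rw [Multiset.coe_count]
        exact List.nodup_iff_count_le_one.mp hnodup s
      have h2 : 1 ≤ Multiset.count s h := Multiset.one_le_count_iff_mem.mpr (Lmem s hs).1
      omega
    · have h0 : Multiset.count s (L : Multiset Seg) = 0 := by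
        rw [Multiset.coe_count]
        exact List.count_eq_zero.mpr hs
      omega
  have hcntL : ∀ c, segA Δ' ≤ c →
      cntP (segB Δ') c (L : Multiset Seg)
        = cntP (segB Δ') c ((L.tail : List Seg) : Multiset Seg) := by
    intro c hc
    rw [hLdef, List.tail_cons, ← Multiset.cons_coe, cntP_cons,
      if_neg (by rintro ⟨he, _⟩; omega), zero_add]
  have key : ∀ c, segA Δ' ≤ c → ∀ hc : c ≤ segB Δ',
      (epsilonSeg (Seg.mk c (segB Δ') hc) h
          = epsilonSeg (Seg.mk c (segB Δ') hc) ((segRemove Δ h).getD 0)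
        ↔ (L.Chain' (fun E F => ¬(segA F = c ∧ segB Δ' ≤ segB E ∧ segB F < segB Δ')) ∧
            ¬(c = segB Δ + 1 ∧ segB Δ' ≤ segB (L.getLast?.getD default)))) := by
    intro c h1 hc
    rw [eps_cnt, eps_cnt, hgetD, cntP_add]
    have e2 : cntP (segB Δ') c h
        = cntP (segB Δ') c (h - (L : Multiset Seg)) + cntP (segB Δ') c (L : Multiset Seg) := by
      conv_lhs => rw [← tsub_add_cancel_of_le hsub]
      rw [cntP_add]
    have e3 := hcntL c h1
    have e4 := cnt_trunc (segB Δ) (segB Δ') hlt L Lpair hLne c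
    have e5 := e4.1
    rw [e2, e3]
    constructor
    · intro heq
      exact e4.2.mp (by omega)
    · intro hcond
      have := e4.2.mpr hcond
      omega
  have hEta : etaEq Δ' h ((segRemove Δ h).getD 0) ↔ (∀ c, segA Δ' ≤ c → c ≤ segB Δ' →
      (L.Chain' (fun E F => ¬(segA F = c ∧ segB Δ' ≤ segB E ∧ segB F < segB Δ')) ∧
        ¬(c = segB Δ + 1 ∧ segB Δ' ≤ segB (L.getLast?.getD default)))) := by
    constructor
    · intro H c h1 h2
      exact (key c h1 h2).mp (H c h1 h2)
    · intro H c h1 h2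
      exact (key c h1 h2).mpr (H c h1 h2)
  have h12 : NonOverlap Δ Δ' h ↔ etaEq Δ' h ((segRemove Δ h).getD 0) := by
    rw [hNO, hEta]
    constructor
    · intro hb c hc1 hc2
      constructor
      · apply chain'_of_adj
        intro E F l1 l2 hdec
        rintro ⟨e1, e2, e3⟩
        have hpw' := Lpair
        rw [hdec] at hpw'
        have hEb : segB E ≤ segB Δb := by
          have hmem := hΔbL
          rw [hdec] at hmem
          rcases List.mem_append.mp hmem with hin1 | hin2
          · have hrel := (List.pairwise_append.mp hpw').2.2 Δb hin1 E (by simp)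
            exact le_of_lt hrel.2
          · rcases List.mem_cons.mp hin2 with heq | hin3
            · exact (congrArg segB heq).ge
            · rcases List.mem_cons.mp hin3 with heq | hin4
              · exfalso
                rw [heq] at hΔbx
                omega
              · exfalso
                have hq := (List.pairwise_append.mp hpw').2.1
                have hq2 := (List.pairwise_cons.mp (List.pairwise_cons.mp hq).2).1 Δb hin4
                have := hq2.1
                omega
        omega
      · rintro ⟨hcl, hbl⟩
        have hlast := (pair_getLast L Lpair Δb hΔbL).1
        omega
    · intro hC
      by_contra hcon
      push_neg at hcon
      by_cases hlb : segB Δ' ≤ segB (L.getLast?.getD default)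
      · have hc := hC (segB Δ + 1) (by omega) (by omega)
        exact hc.2 ⟨rfl, hlb⟩
      · push_neg at hlb
        obtain ⟨E, F, l1, l2, hdec, hPE, hPF⟩ :=
          exists_cross (fun D => segB Δ' ≤ segB D) L ⟨Δb, hΔbL, hcon⟩ (by omega)
        push_neg at hPF
        have hFL : F ∈ L := by rw [hdec]; simp
        have hFx : segA Δ' - 1 < segA F := by
          by_contra hle
          push_neg at hle
          have := D2 F hFL hle
          omega
        have hfb := segA_le_segB F
        have hc := hC (segA F) (by omega) (by omega)
        exact (chain'_rel hc.1 hdec) ⟨rfl, hPE, by omega⟩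
  exact ⟨h12, h13⟩
end
end

section
/- Let h be a multisegment, Δ a segment admissible to h, and Δ' = [a',b'] a segment linked to Δ with Δ < Δ', and suppose the triple (Δ, Δ', h) satisfies the non-overlapping property. Then for any segment Δ̃ = [ã, b'] with ã ≥ a' that is linked to Δ, the triple (Δ, Δ̃, h) also satisfies the non-overlapping property. -/
noncomputable section
open Classical

lemma removalTail_spec (h : Multiset Seg) (b : ℤ) :
    ∀ (fuel : ℕ) (aprev bprev : ℤ) (D : Seg), D ∈ removalTail h b fuel aprev bprev →
      aprev < segA D ∧ b ≤ segB D ∧ segB D < bprev := by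
  intro fuel
  induction fuel with
  | zero => intro _ _ D hD; simp [removalTail] at hD
  | succ n ih =>
    intro aprev bprev D hD
    rw [removalTail] at hD
    split at hD
    · rename_i hx
      obtain hspec := Classical.choose_spec hx
      rcases List.mem_cons.mp hD with rfl | hD
      · exact hspec.1.2
      · obtain ⟨h1, h2, h3⟩ := ih _ _ D hD
        exact ⟨lt_trans hspec.1.2.1 h1, h2, lt_trans h3 hspec.1.2.2.2⟩
    · simp at hD

lemma removalTail_pairwise_s17 (h : Multiset Seg) (b : ℤ) :
    ∀ (fuel : ℕ) (aprev bprev : ℤ),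
      List.Pairwise (fun D D' => segA D < segA D' ∧ segB D' < segB D)
        (removalTail h b fuel aprev bprev) := by
  intro fuel
  induction fuel with
  | zero => intro _ _; rw [removalTail]; exact List.Pairwise.nil
  | succ n ih =>
    intro aprev bprev
    rw [removalTail]
    split
    · refine List.Pairwise.cons ?_ (ih _ _)
      intro D' hD'
      obtain ⟨h1, h2, h3⟩ := removalTail_spec h b n _ _ D' hD'
      exact ⟨h1, h3⟩
    · exact List.Pairwise.nil

lemma removalSeq_eq (Δ : Seg) (h : Multiset Seg) (hadm : SegAdmissible Δ h) :
    ∃ D₁ tail, removalSeq Δ h = D₁ :: tail ∧ segA D₁ = segA Δ ∧ segB Δ ≤ segB D₁ ∧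
      tail = removalTail h (segB Δ) (segB D₁ - segB Δ).toNat (segA D₁) (segB D₁) := by
  have hx : ∃ D, (D ∈ h ∧ segA D = segA Δ ∧ segB Δ ≤ segB D) ∧
      ∀ D', (D' ∈ h ∧ segA D' = segA Δ ∧ segB Δ ≤ segB D') → segB D ≤ segB D' := by
    obtain ⟨D0, hD0, ha0, hb0⟩ := hadm
    set s : Finset Seg :=
      (h.filter (fun D => segA D = segA Δ ∧ segB Δ ≤ segB D)).toFinset with hs
    have hmem : ∀ D, D ∈ s ↔ (D ∈ h ∧ segA D = segA Δ ∧ segB Δ ≤ segB D) := by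
      intro D
      rw [hs, Multiset.mem_toFinset, Multiset.mem_filter]
    have hne : s.Nonempty := ⟨D0, (hmem D0).mpr ⟨hD0, ha0, hb0⟩⟩
    obtain ⟨D, hD, hmin⟩ := Finset.exists_min_image s segB hne
    exact ⟨D, (hmem D).mp hD, fun D' hD' => hmin D' ((hmem D').mpr hD')⟩
  rw [removalSeq, dif_pos hx]
  exact ⟨_, _, rfl, (Classical.choose_spec hx).1.2.1, (Classical.choose_spec hx).1.2.2, rfl⟩

lemma key (x x' : ℤ) (hxx : x ≤ x') :
    ∀ (L : List Seg) (D₀ : Seg),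
      List.Pairwise (fun D D' => segA D < segA D' ∧ segB D' < segB D) (D₀ :: L) →
      segA D₀ ≤ x →
    ∃ Dx Dx', ((D₀ :: L).filter (fun D => decide (segA D ≤ x))).getLast? = some Dx ∧
              ((D₀ :: L).filter (fun D => decide (segA D ≤ x'))).getLast? = some Dx' ∧
              segA Dx ≤ x ∧ segB Dx' ≤ segB Dx := by
  intro L
  induction L with
  | nil =>
    intro D₀ _ hD₀
    exact ⟨D₀, D₀, by simp [hD₀], by simp [le_trans hD₀ hxx], hD₀, le_refl _⟩
  | cons E rest ih =>
    intro D₀ hpw hD₀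
    by_cases hE : segA E ≤ x
    · obtain ⟨Dx, Dx', h1, h2, h3, h4⟩ := ih E hpw.tail hE
      refine ⟨Dx, Dx', ?_, ?_, h3, h4⟩
      · rw [List.filter_cons_of_pos (by simpa using hD₀), List.getLast?_cons, h1]; rfl
      · rw [List.filter_cons_of_pos (by simpa using le_trans hD₀ hxx),
          List.getLast?_cons, h2]; rfl
    · have hrest : ∀ D ∈ E :: rest, ¬ segA D ≤ x := by
        intro D hD
        rcases List.mem_cons.mp hD with rfl | hD
        · exact hE
        · have := (List.pairwise_cons.mp hpw.tail).1 D hD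
          intro hc; exact hE (le_trans (le_of_lt this.1) hc)
      have hfx : (E :: rest).filter (fun D => decide (segA D ≤ x)) = [] := by
        rw [List.filter_eq_nil_iff]
        intro D hD; simpa using hrest D hD
      have hfil : ((D₀ :: E :: rest).filter (fun D => decide (segA D ≤ x))).getLast?
          = some D₀ := by
        rw [List.filter_cons_of_pos (by simpa using hD₀), hfx]; rfl
      have hDB : ∀ D' ∈ E :: rest, segB D' < segB D₀ := by
        intro D' hD'; exact ((List.pairwise_cons.mp hpw).1 D' hD').2
      set l' := (E :: rest).filter (fun D => decide (segA D ≤ x')) with hl'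
      have hfull : ((D₀ :: E :: rest).filter (fun D => decide (segA D ≤ x')))
          = D₀ :: l' := by
        rw [List.filter_cons_of_pos (by simpa using le_trans hD₀ hxx)]
      cases hgl : l'.getLast? with
      | none =>
        refine ⟨D₀, D₀, hfil, ?_, hD₀, le_refl _⟩
        rw [hfull, List.getLast?_cons, hgl]; rfl
      | some Dx' =>
        refine ⟨D₀, Dx', hfil, ?_, hD₀, ?_⟩
        · rw [hfull, List.getLast?_cons, hgl]; rfl
        · have hmem : Dx' ∈ l' := List.mem_of_getLast? hgl
          exact le_of_lt (hDB Dx' (List.mem_of_mem_filter hmem))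

/-- the non-overlapping property is inherited by segments
`[ã, b']` with `ã ≥ a'` linked to `Δ`. -/
theorem statement17 (h : Multiset Seg) (Δ Δ' Δt : Seg)
    (hadm : SegAdmissible Δ h) (hlink : Linked Δ Δ') (hlt : segB Δ < segB Δ')
    (hno : NonOverlap Δ Δ' h)
    (hb : segB Δt = segB Δ') (ha : segA Δ' ≤ segA Δt) (hlinkt : Linked Δ Δt) :
    NonOverlap Δ Δt h := by
  obtain ⟨D₁, tail, hLeq, ha1, hb1, htail⟩ := removalSeq_eq Δ h hadm
  set x : ℤ := segA Δ' - 1 with hxdef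
  set x' : ℤ := segA Δt - 1 with hx'def
  have hxx : x ≤ x' := by omega
  have hxB : x ≤ segB Δ := by have := hlink.2.1; omega
  have hx'B : x' ≤ segB Δ := by have := hlinkt.2.1; omega
  have haΔ : segA Δ < segA Δ' := by
    by_contra hc
    exact hlink.2.2.1 ⟨le_of_not_gt hc, le_of_lt hlt⟩
  have hD₀x : segA D₁ ≤ x := by rw [ha1]; omega
  have hpw : List.Pairwise (fun D D' => segA D < segA D' ∧ segB D' < segB D)
      (D₁ :: tail) := by
    refine List.Pairwise.cons ?_ (htail ▸ removalTail_pairwise_s17 h (segB Δ) _ _ _)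
    intro D' hD'
    obtain ⟨h1, h2, h3⟩ := removalTail_spec h (segB Δ) _ _ _ D' (htail ▸ hD')
    exact ⟨h1, h3⟩
  have hallB : ∀ D ∈ D₁ :: tail, segB Δ ≤ segB D := by
    intro D hD
    rcases List.mem_cons.mp hD with rfl | hD
    · exact hb1
    · exact (removalTail_spec h (segB Δ) _ _ _ D (htail ▸ hD)).2.1
  have hfc : ∀ y : ℤ, y ≤ segB Δ →
      (D₁ :: tail).filter (fun D => decide (segA D ≤ y ∧ y ≤ segB D))
        = (D₁ :: tail).filter (fun D => decide (segA D ≤ y)) := by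
    intro y hy
    refine List.filter_congr ?_
    intro D hD
    refine decide_eq_decide.mpr ⟨fun p => p.1, fun p => ⟨p, le_trans hy (hallB D hD)⟩⟩
  obtain ⟨Dx, Dx', h1, h2, h3, h4⟩ := key x x' hxx tail D₁ hpw hD₀x
  have hsx : shortestCont Δ h x = Dx := by
    rw [shortestCont, hLeq, hfc x hxB, h1]; rfl
  have hsx' : shortestCont Δ h x' = Dx' := by
    rw [shortestCont, hLeq, hfc x' hx'B, h2]; rfl
  intro hsub
  rw [← hx'def, hsx'] at hsub
  refine hno ?_
  rw [← hxdef, hsx]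
  exact ⟨by omega, by rw [← hb]; exact le_trans hsub.2 h4⟩
end
end
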